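/- Finite model property of DFD^{≠∅}: for every L^{≠∅}-formula φ, if φ is true at some state of some general relational model of DFD^{≠∅}, then φ is true at some state of a finite general relational model of DFD^{≠∅} (one whose set of states is finite). -/

import Mathlib

/-- Terms of DFD: `x ::= v | ○x`. -/
inductive Tm (V : Type) : Type where
  | base : V → Tm V
  | next : Tm V → Tm V
deriving DecidableEq

namespace Tm

variable {V : Type}

/-- The set of terms `○X := {○x : x ∈ X}`. -/
def nextSet [DecidableEq V] (X : Finset (Tm V)) : Finset (Tm V) := X.image Tm.next

/-- The number of `○`'s in a term. -/
def depth : Tm V → ℕ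
  | .base _ => 0
  | .next x => x.depth + 1

/-- The basic variable underlying a term. -/
def baseVar : Tm V → V
  | .base v => v
  | .next x => x.baseVar

/-- The term `○ⁿ x`. -/
def iter : ℕ → Tm V → Tm V
  | 0, x => x
  | n + 1, x => .next (iter n x)

/-- The set of terms `○ⁿ X`. -/
def iterSet [DecidableEq V] : ℕ → Finset (Tm V) → Finset (Tm V)
  | 0, X => X
  | n + 1, X => nextSet (iterSet n X)

end Tm

/-- Formulas of the language `L` of DFD, for the vocabulary `(V, Pred, ar)`. -/
inductive Fm (V Pred : Type) (ar : Pred → ℕ) : Type where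
  | atom : (P : Pred) → (Fin (ar P) → Tm V) → Fm V Pred ar
  | neg : Fm V Pred ar → Fm V Pred ar
  | and : Fm V Pred ar → Fm V Pred ar → Fm V Pred ar
  | next : Fm V Pred ar → Fm V Pred ar
  | dquant : Finset (Tm V) → Fm V Pred ar → Fm V Pred ar
  | datom : Finset (Tm V) → Tm V → Fm V Pred ar

namespace Fm

variable {V Pred : Type} {ar : Pred → ℕ}

/-- Material implication, defined from `¬` and `∧`. -/
def imp (φ ψ : Fm V Pred ar) : Fm V Pred ar := .neg (.and φ (.neg ψ))

/-- Material biconditional. -/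
def iff (φ ψ : Fm V Pred ar) : Fm V Pred ar := .and (φ.imp ψ) (ψ.imp φ)

/-- The formula `○ⁿ φ`. -/
def iterNext : ℕ → Fm V Pred ar → Fm V Pred ar
  | 0, φ => φ
  | n + 1, φ => .next (iterNext n φ)

/-- Boolean evaluation of a formula under a valuation of formulas; formulas that are not
negations or conjunctions are treated as propositional atoms. -/
def boolEval (v : Fm V Pred ar → Bool) : Fm V Pred ar → Bool
  | .neg φ => !(boolEval v φ)
  | .and φ ψ => boolEval v φ && boolEval v ψ
  | φ => v φ

/-- Classical propositional tautologies. -/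
def Taut (φ : Fm V Pred ar) : Prop := ∀ v, boolEval v φ = true

/-- A fixed trivially valid formula `D_{{v₀}} v₀`, used as the empty conjunction. -/
def vtop [Inhabited V] : Fm V Pred ar := .datom {Tm.base default} (Tm.base default)

/-- Conjunction of a list of formulas. -/
def bigAnd [Inhabited V] : List (Fm V Pred ar) → Fm V Pred ar
  | [] => vtop
  | φ :: l => l.foldl Fm.and φ

/-- The formula `D_X Y`: the conjunction of `D_X y` over `y ∈ Y`. -/
noncomputable def depF [Inhabited V] (X Y : Finset (Tm V)) : Fm V Pred ar :=
  bigAnd (Y.toList.map (Fm.datom X))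

/-- Membership in the fragment `L^{≠∅}`: every index set of a dependence quantifier or
dependence atom is non-empty. -/
def neIdx : Fm V Pred ar → Prop
  | .atom _ _ => True
  | .neg φ => φ.neIdx
  | .and φ ψ => φ.neIdx ∧ ψ.neIdx
  | .next φ => φ.neIdx
  | .dquant X φ => X.Nonempty ∧ φ.neIdx
  | .datom X _ => X.Nonempty

end Fm

/-- The set `V = {v₁, …, v_N}` of all basic variables, as a set of terms. -/
def fullV (V : Type) [Fintype V] [DecidableEq V] : Finset (Tm V) :=
  (Finset.univ : Finset V).image Tm.base
/-- The underlying frame of a general relational model: a set of worlds, a transition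
function, a binary relation `=_X` for each finite set of terms `X`, and a valuation for
predicate atoms and dependence atoms. -/
structure GRKripke (V Pred : Type) (ar : Pred → ℕ) where
  W : Type
  nonempty : Nonempty W
  g : W → W
  eq : Finset (Tm V) → W → W → Prop
  valAtom : (P : Pred) → (Fin (ar P) → Tm V) → W → Prop
  valDep : Finset (Tm V) → Tm V → W → Prop

variable {V Pred : Type} {ar : Pred → ℕ}

/-- Truth of a formula at a state of a general relational model. -/
def GRKripke.sat (M : GRKripke V Pred ar) : Fm V Pred ar → M.W → Prop
  | .atom P args, s => M.valAtom P args s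
  | .neg φ, s => ¬ M.sat φ s
  | .and φ ψ, s => M.sat φ s ∧ M.sat ψ s
  | .next φ, s => M.sat φ (M.g s)
  | .dquant X φ, s => ∀ t, M.eq X s t → M.sat φ t
  | .datom X y, s => M.valDep X y s

/-- General relational models of the logic DFD (conditions C1–C8). -/
structure GRModel (V Pred : Type) [DecidableEq V] [Fintype V] (ar : Pred → ℕ)
    extends GRKripke V Pred ar where
  C1 : ∀ s w, eq ∅ s w
  C2 : ∀ X : Finset (Tm V), Equivalence (eq X)
  C3ref : ∀ (X : Finset (Tm V)) (x : Tm V), x ∈ X → ∀ s, valDep X x s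
  C3trans : ∀ (X Y Z : Finset (Tm V)) (s : W), (∀ y ∈ Y, valDep X y s) →
      (∀ z ∈ Z, valDep Y z s) → ∀ z ∈ Z, valDep X z s
  C3det : ∀ (x : Tm V) (s : W), valDep (fullV V) (Tm.next x) s
  C4 : ∀ (X Y : Finset (Tm V)) (s w : W), eq X s w → (∀ y ∈ Y, valDep X y s) →
      (∀ y ∈ Y, valDep X y w) ∧ eq Y s w
  C5 : ∀ (P : Pred) (args : Fin (ar P) → Tm V) (X : Finset (Tm V)) (s w : W),
      eq X s w → (∀ i, args i ∈ X) → valAtom P args s → valAtom P args w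
  C6 : ∀ (P : Pred) (args : Fin (ar P) → Tm V) (s : W),
      valAtom P (fun i => Tm.next (args i)) s ↔ valAtom P args (g s)
  C7 : ∀ (X : Finset (Tm V)) (s w : W), eq (Tm.nextSet X) s w → eq X (g s) (g w)
  C8 : ∀ (X Y : Finset (Tm V)) (s : W), (∀ y ∈ Y, valDep X y (g s)) →
      ∀ y ∈ Tm.nextSet Y, valDep (Tm.nextSet X) y s

/-- General relational models of the logic DFD^{≠∅}: the relations `=_X` and conditions are
only required for non-empty `X`, and condition C1 is dropped. -/
structure GRModelNE (V Pred : Type) [DecidableEq V] [Fintype V] (ar : Pred → ℕ)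
    extends GRKripke V Pred ar where
  C2 : ∀ X : Finset (Tm V), X.Nonempty → Equivalence (eq X)
  C3ref : ∀ (X : Finset (Tm V)) (x : Tm V), x ∈ X → ∀ s, valDep X x s
  C3trans : ∀ (X Y Z : Finset (Tm V)) (s : W), X.Nonempty → Y.Nonempty →
      (∀ y ∈ Y, valDep X y s) → (∀ z ∈ Z, valDep Y z s) → ∀ z ∈ Z, valDep X z s
  C3det : ∀ (x : Tm V) (s : W), valDep (fullV V) (Tm.next x) s
  C4 : ∀ (X Y : Finset (Tm V)) (s w : W), X.Nonempty → Y.Nonempty →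
      eq X s w → (∀ y ∈ Y, valDep X y s) → (∀ y ∈ Y, valDep X y w) ∧ eq Y s w
  C5 : ∀ (P : Pred) (args : Fin (ar P) → Tm V) (X : Finset (Tm V)) (s w : W), X.Nonempty →
      eq X s w → (∀ i, args i ∈ X) → valAtom P args s → valAtom P args w
  C6 : ∀ (P : Pred) (args : Fin (ar P) → Tm V) (s : W),
      valAtom P (fun i => Tm.next (args i)) s ↔ valAtom P args (g s)
  C7 : ∀ (X : Finset (Tm V)) (s w : W), X.Nonempty →
      eq (Tm.nextSet X) s w → eq X (g s) (g w)
  C8 : ∀ (X Y : Finset (Tm V)) (s : W), X.Nonempty → (∀ y ∈ Y, valDep X y (g s)) →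
      ∀ y ∈ Tm.nextSet Y, valDep (Tm.nextSet X) y s

/- ============= Auxiliary development for the finite model property ============= -/

namespace FMPaux
set_option linter.unusedSectionVars false

open Tm

variable {V Pred : Type} [DecidableEq V] [Fintype V] [Inhabited V] {ar : Pred → ℕ}

/-- Strip `m` leading `○`'s from a term. -/
def stripn : ℕ → Tm V → Tm V
  | 0, x => x
  | _ + 1, .base v => .base v
  | m + 1, .next x => stripn m x

@[simp] lemma stripn_zero (x : Tm V) : stripn 0 x = x := rfl

@[simp] lemma stripn_next (m : ℕ) (x : Tm V) : stripn (m + 1) (Tm.next x) = stripn m x := rfl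

lemma iter_stripn : ∀ (m : ℕ) (x : Tm V), m ≤ x.depth → Tm.iter m (stripn m x) = x
  | 0, x, _ => rfl
  | m + 1, .base v, h => by simp [Tm.depth] at h
  | m + 1, .next x, h => by
      have hx : m ≤ x.depth := by simpa [Tm.depth] using h
      show Tm.next (Tm.iter m (stripn m x)) = Tm.next x
      rw [iter_stripn m x hx]

lemma iter_next : ∀ (k : ℕ) (x : Tm V), Tm.iter k (Tm.next x) = Tm.next (Tm.iter k x)
  | 0, _ => rfl
  | k + 1, x => by show Tm.next _ = Tm.next (Tm.next _); rw [iter_next k x]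

lemma iterSet_eq_image : ∀ (k : ℕ) (X : Finset (Tm V)),
    Tm.iterSet k X = X.image (Tm.iter k)
  | 0, X => by
      show X = _
      rw [show Tm.iter 0 = (id : Tm V → Tm V) from funext fun x => rfl, Finset.image_id]
  | k + 1, X => by
      show Tm.nextSet (Tm.iterSet k X) = _
      rw [iterSet_eq_image k X]
      unfold Tm.nextSet
      rw [Finset.image_image]
      apply Finset.image_congr
      intro x _
      show Tm.next (Tm.iter k x) = Tm.iter (k + 1) x
      rfl

lemma mem_iterSet {k : ℕ} {X : Finset (Tm V)} {z : Tm V} :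
    z ∈ Tm.iterSet k X ↔ ∃ x ∈ X, Tm.iter k x = z := by
  rw [iterSet_eq_image]; exact Finset.mem_image

lemma iterSet_nonempty {k : ℕ} {X : Finset (Tm V)} (h : X.Nonempty) :
    (Tm.iterSet k X).Nonempty := by
  rw [iterSet_eq_image]; exact h.image _

lemma iterSet_succ (k : ℕ) (X : Finset (Tm V)) :
    Tm.iterSet (k + 1) X = Tm.nextSet (Tm.iterSet k X) := rfl

lemma iterSet_nextSet (k : ℕ) (X : Finset (Tm V)) :
    Tm.iterSet k (Tm.nextSet X) = Tm.iterSet (k + 1) X := by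
  rw [iterSet_eq_image, iterSet_eq_image]
  show _ = Finset.image _ X
  unfold Tm.nextSet
  rw [Finset.image_image]
  apply Finset.image_congr
  intro x _
  show Tm.iter k (Tm.next x) = Tm.iter (k+1) x
  rw [iter_next]; rfl

/-- Minimal `○`-depth of a tuple of terms. -/
def md : ∀ {k : ℕ}, (Fin k → Tm V) → ℕ
  | 0, _ => 0
  | 1, a => (a 0).depth
  | k + 2, a => min ((a 0).depth) (md fun i : Fin (k + 1) => a i.succ)

lemma md_le : ∀ {k : ℕ} (a : Fin k → Tm V) (i : Fin k), md a ≤ (a i).depth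
  | 0, _, i => i.elim0
  | 1, a, i => by
      have : i = 0 := Subsingleton.elim _ _
      subst this; exact le_refl _
  | k + 2, a, i => by
      rcases Fin.eq_zero_or_eq_succ i with h | ⟨j, rfl⟩
      · subst h; exact min_le_left _ _
      · exact le_trans (min_le_right _ _) (md_le (fun i : Fin (k+1) => a i.succ) j)

lemma md_next : ∀ {k : ℕ}, k ≠ 0 → ∀ (a : Fin k → Tm V),
    md (fun i => Tm.next (a i)) = md a + 1
  | 0, h, _ => absurd rfl h
  | 1, _, a => rfl
  | k + 2, _, a => by
      show min ((a 0).depth + 1) (md fun i : Fin (k+1) => Tm.next (a i.succ)) = _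
      rw [md_next (Nat.succ_ne_zero k) (fun i : Fin (k+1) => a i.succ)]
      show min ((a 0).depth + 1) (md (fun i : Fin (k+1) => a i.succ) + 1)
        = min ((a 0).depth) (md fun i : Fin (k+1) => a i.succ) + 1
      omega

lemma md_eq_zero : ∀ {k : ℕ}, k = 0 → ∀ (a : Fin k → Tm V), md a = 0
  | 0, _, _ => rfl
  | k + 1, h, _ => absurd h (Nat.succ_ne_zero k)

lemma empty_fun_ext {k : ℕ} (h : k = 0) {α : Sort*} (f g : Fin k → α) : f = g := by
  subst h; funext i; exact i.elim0

lemma depth_ge_one_eta {x : Tm V} (h : 1 ≤ x.depth) : x = Tm.next (stripn 1 x) := by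
  cases x with
  | base v => simp [Tm.depth] at h
  | next y => rfl

lemma stripn_one_stripn : ∀ (m : ℕ) (x : Tm V), stripn m (stripn 1 x) = stripn (m + 1) x
  | m, .base v => by cases m <;> rfl
  | m, .next y => rfl

lemma depth_stripn_one {x : Tm V} (h : 1 ≤ x.depth) : (stripn 1 x).depth = x.depth - 1 := by
  cases x with
  | base v => simp [Tm.depth] at h
  | next y => simp [Tm.depth, stripn]

end FMPaux

namespace FMPaux
set_option linter.unusedSectionVars false
set_option maxHeartbeats 1000000

variable {V Pred : Type} [DecidableEq V] [Fintype V] [Inhabited V] {ar : Pred → ℕ}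

/-- The list of subformulas of a formula. -/
def subs : Fm V Pred ar → List (Fm V Pred ar)
  | .atom P a => [.atom P a]
  | .neg ψ => .neg ψ :: subs ψ
  | .and ψ χ => .and ψ χ :: (subs ψ ++ subs χ)
  | .next ψ => .next ψ :: subs ψ
  | .dquant X ψ => .dquant X ψ :: subs ψ
  | .datom X y => [.datom X y]

lemma subs_self : ∀ φ : Fm V Pred ar, φ ∈ subs φ
  | .atom P a => List.mem_singleton.2 rfl
  | .neg ψ => List.mem_cons_self
  | .and ψ χ => List.mem_cons_self
  | .next ψ => List.mem_cons_self
  | .dquant X ψ => List.mem_cons_self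
  | .datom X y => List.mem_singleton.2 rfl

lemma subs_closed : ∀ {φ ψ : Fm V Pred ar}, ψ ∈ subs φ → subs ψ ⊆ subs φ := by
  intro φ
  induction φ with
  | atom P a => intro ψ h; rw [subs, List.mem_singleton] at h; subst h; exact fun _ h => h
  | neg χ ih =>
      intro ψ h
      rw [subs, List.mem_cons] at h
      rcases h with rfl | h
      · exact fun _ h => h
      · exact fun x hx => List.mem_cons_of_mem _ (ih h hx)
  | and χ₁ χ₂ ih₁ ih₂ =>
      intro ψ h
      rw [subs, List.mem_cons, List.mem_append] at h
      rcases h with rfl | h | h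
      · exact fun _ h => h
      · exact fun x hx => List.mem_cons_of_mem _ (List.mem_append.2 (Or.inl (ih₁ h hx)))
      · exact fun x hx => List.mem_cons_of_mem _ (List.mem_append.2 (Or.inr (ih₂ h hx)))
  | next χ ih =>
      intro ψ h
      rw [subs, List.mem_cons] at h
      rcases h with rfl | h
      · exact fun _ h => h
      · exact fun x hx => List.mem_cons_of_mem _ (ih h hx)
  | dquant X χ ih =>
      intro ψ h
      rw [subs, List.mem_cons] at h
      rcases h with rfl | h
      · exact fun _ h => h
      · exact fun x hx => List.mem_cons_of_mem _ (ih h hx)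
  | datom X y => intro ψ h; rw [subs, List.mem_singleton] at h; subst h; exact fun _ h => h

lemma neIdx_mem : ∀ {φ ψ : Fm V Pred ar}, φ.neIdx → ψ ∈ subs φ → ψ.neIdx := by
  intro φ
  induction φ with
  | atom P a => intro ψ h hm; rw [subs, List.mem_singleton] at hm; subst hm; exact h
  | neg χ ih =>
      intro ψ h hm
      rw [subs, List.mem_cons] at hm
      rcases hm with rfl | hm
      · exact h
      · exact ih h hm
  | and χ₁ χ₂ ih₁ ih₂ =>
      intro ψ h hm
      rw [subs, List.mem_cons, List.mem_append] at hm
      rcases hm with rfl | hm | hm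
      · exact h
      · exact ih₁ h.1 hm
      · exact ih₂ h.2 hm
  | next χ ih =>
      intro ψ h hm
      rw [subs, List.mem_cons] at hm
      rcases hm with rfl | hm
      · exact h
      · exact ih h hm
  | dquant X χ ih =>
      intro ψ h hm
      rw [subs, List.mem_cons] at hm
      rcases hm with rfl | hm
      · exact h
      · exact ih h.2 hm
  | datom X y => intro ψ h hm; rw [subs, List.mem_singleton] at hm; subst hm; exact h

/-- Temporal height of a formula. -/
def nh : Fm V Pred ar → ℕ
  | .atom _ _ => 0
  | .neg ψ => nh ψ
  | .and ψ χ => max (nh ψ) (nh χ)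
  | .next ψ => nh ψ + 1
  | .dquant _ ψ => nh ψ
  | .datom _ _ => 0

/-- Index sets of dependence quantifiers occurring in `φ`. -/
def idxs (φ : Fm V Pred ar) : List (Finset (Tm V)) :=
  (subs φ).filterMap fun ψ => match ψ with
    | .dquant X _ => some X
    | _ => none

/-- Dependence-atom pairs occurring in `φ`. -/
def rpairs (φ : Fm V Pred ar) : List (Finset (Tm V) × Tm V) :=
  (subs φ).filterMap fun ψ => match ψ with
    | .datom X y => some (X, y)
    | _ => none

/-- Predicate atoms occurring in `φ`. -/
def atomsL (φ : Fm V Pred ar) : List ((P : Pred) × (Fin (ar P) → Tm V)) :=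
  (subs φ).filterMap fun ψ => match ψ with
    | .atom P a => some ⟨P, a⟩
    | _ => none

/-- Stripped versions of the atoms of `φ`. -/
def RAtoms (φ : Fm V Pred ar) : List ((P : Pred) × (Fin (ar P) → Tm V)) :=
  (atomsL φ).map fun pa => ⟨pa.1, fun i => stripn (md pa.2) (pa.2 i)⟩

/-- Relevant target terms. -/
def RTm (φ : Fm V Pred ar) : List (Tm V) := (rpairs φ).map Prod.snd

/-- The argument set of a tuple of terms. -/
def argset {k : ℕ} (a : Fin k → Tm V) : Finset (Tm V) := Finset.image a Finset.univ

/-- Relevant sets of terms. -/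
def RelSets (φ : Fm V Pred ar) : List (Finset (Tm V)) :=
  idxs φ ++ (rpairs φ).map Prod.fst ++
    (RAtoms φ).filterMap (fun pa => if 0 < ar pa.1 then some (argset pa.2) else none)

/-- Maximal stripped depth of atoms of `φ`. -/
def Dd (φ : Fm V Pred ar) : ℕ := ((atomsL φ).map fun pa => md pa.2).foldr max 0

/-- The length of the world chain. -/
def nn (φ : Fm V Pred ar) : ℕ := nh φ + Dd φ + 1

lemma le_foldr_max {x : ℕ} : ∀ {l : List ℕ}, x ∈ l → x ≤ l.foldr max 0
  | [], h => absurd h List.not_mem_nil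
  | a :: l, h => by
      rcases List.mem_cons.1 h with rfl | h
      · exact le_max_left _ _
      · exact le_trans (le_foldr_max h) (le_max_right _ _)

lemma mem_idxs {φ ψ : Fm V Pred ar} {X : Finset (Tm V)}
    (h : Fm.dquant X ψ ∈ subs φ) : X ∈ idxs φ :=
  List.mem_filterMap.2 ⟨Fm.dquant X ψ, h, rfl⟩

lemma mem_rpairs {φ : Fm V Pred ar} {X : Finset (Tm V)} {y : Tm V}
    (h : Fm.datom X y ∈ subs φ) : (X, y) ∈ rpairs φ :=
  List.mem_filterMap.2 ⟨Fm.datom X y, h, rfl⟩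

lemma mem_atomsL {φ : Fm V Pred ar} {P : Pred} {a : Fin (ar P) → Tm V}
    (h : Fm.atom P a ∈ subs φ) : (⟨P, a⟩ : (P : Pred) × (Fin (ar P) → Tm V)) ∈ atomsL φ :=
  List.mem_filterMap.2 ⟨Fm.atom P a, h, rfl⟩

lemma mem_RAtoms {φ : Fm V Pred ar} {P : Pred} {a : Fin (ar P) → Tm V}
    (h : Fm.atom P a ∈ subs φ) :
    (⟨P, fun i => stripn (md a) (a i)⟩ : (P : Pred) × (Fin (ar P) → Tm V)) ∈ RAtoms φ :=
  List.mem_map.2 ⟨⟨P, a⟩, mem_atomsL h, rfl⟩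

lemma md_le_Dd {φ : Fm V Pred ar} {P : Pred} {a : Fin (ar P) → Tm V}
    (h : Fm.atom P a ∈ subs φ) : md a ≤ Dd φ :=
  le_foldr_max (List.mem_map.2 ⟨⟨P, a⟩, mem_atomsL h, rfl⟩)

lemma idxs_subset_RelSets {φ : Fm V Pred ar} {X : Finset (Tm V)} (h : X ∈ idxs φ) :
    X ∈ RelSets φ :=
  List.mem_append.2 (Or.inl (List.mem_append.2 (Or.inl h)))

lemma rpairs_fst_mem_RelSets {φ : Fm V Pred ar} {X : Finset (Tm V)} {y : Tm V}
    (h : (X, y) ∈ rpairs φ) : X ∈ RelSets φ :=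
  List.mem_append.2 (Or.inl (List.mem_append.2 (Or.inr (List.mem_map.2 ⟨(X, y), h, rfl⟩))))

lemma rpairs_snd_mem_RTm {φ : Fm V Pred ar} {X : Finset (Tm V)} {y : Tm V}
    (h : (X, y) ∈ rpairs φ) : y ∈ RTm φ :=
  List.mem_map.2 ⟨(X, y), h, rfl⟩

lemma argset_mem_RelSets {φ : Fm V Pred ar} {pa : (P : Pred) × (Fin (ar P) → Tm V)}
    (h : pa ∈ RAtoms φ) (h0 : 0 < ar pa.1) : argset pa.2 ∈ RelSets φ :=
  List.mem_append.2 (Or.inr (List.mem_filterMap.2 ⟨pa, h, by rw [if_pos h0]⟩))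

lemma RelSets_nonempty {φ : Fm V Pred ar} (hφ : φ.neIdx) {S : Finset (Tm V)}
    (h : S ∈ RelSets φ) : S.Nonempty := by
  rcases List.mem_append.1 h with h | h
  · rcases List.mem_append.1 h with h | h
    · obtain ⟨ψ, hψ, hh⟩ := List.mem_filterMap.1 h
      match ψ, hh with
      | .dquant X χ, hh =>
        cases hh
        exact (neIdx_mem hφ hψ).1
    · obtain ⟨⟨X, y⟩, hXy, rfl⟩ := List.mem_map.1 h
      obtain ⟨ψ, hψ, hh⟩ := List.mem_filterMap.1 hXy
      match ψ, hh with
      | .datom X' y', hh =>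
        cases hh
        exact neIdx_mem hφ hψ
  · obtain ⟨pa, hpa, hh⟩ := List.mem_filterMap.1 h
    by_cases h0 : 0 < ar pa.1
    · rw [if_pos h0] at hh
      cases hh
      exact ⟨pa.2 ⟨0, h0⟩, Finset.mem_image_of_mem _ (Finset.mem_univ _)⟩
    · rw [if_neg h0] at hh; cases hh

lemma fullV_nonempty : (fullV V).Nonempty :=
  ⟨Tm.base default, Finset.mem_image_of_mem _ (Finset.mem_univ _)⟩

lemma iterSet_argset {k m : ℕ} (a : Fin k → Tm V) :
    Tm.iterSet m (argset a) = argset (fun i => Tm.iter m (a i)) := by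
  rw [iterSet_eq_image]
  unfold argset
  rw [Finset.image_image]
  rfl

end FMPaux

namespace FMPaux
set_option linter.unusedSectionVars false
set_option linter.unusedVariables false
set_option maxHeartbeats 1000000

variable {V Pred : Type} [DecidableEq V] [Fintype V] [Inhabited V] {ar : Pred → ℕ}
variable (M : GRModelNE V Pred ar)

/-- Iterated C8. -/
lemma C8iter : ∀ (k : ℕ) (X : Finset (Tm V)), X.Nonempty → ∀ (y : Tm V) (s : M.W),
    M.valDep X y (M.g^[k] s) → M.valDep (Tm.iterSet k X) (Tm.iter k y) s := by
  intro k
  induction k with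
  | zero => intro X hX y s h; exact h
  | succ k ih =>
      intro X hX y s h
      rw [Function.iterate_succ_apply] at h
      have h1 := ih X hX y (M.g s) h
      have h2 := M.C8 (Tm.iterSet k X) {Tm.iter k y} s (iterSet_nonempty hX)
        (by intro z hz; rw [Finset.mem_singleton] at hz; subst hz; exact h1)
        (Tm.next (Tm.iter k y)) (Finset.mem_image_of_mem _ (Finset.mem_singleton_self _))
      rw [← iterSet_succ] at h2
      exact h2

/-- Iterated C7. -/
lemma C7iter {S : Finset (Tm V)} (hS : S.Nonempty) :
    ∀ (k : ℕ) (s t : M.W), M.eq (Tm.iterSet k S) s t → M.eq S (M.g^[k] s) (M.g^[k] t) := by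
  intro k
  induction k with
  | zero => intro s t h; exact h
  | succ k ih =>
      intro s t h
      rw [iterSet_succ] at h
      have h1 := M.C7 (Tm.iterSet k S) s t (iterSet_nonempty hS) h
      have h2 := ih (M.g s) (M.g t) h1
      rw [← Function.iterate_succ_apply, ← Function.iterate_succ_apply] at h2
      exact h2

/-- Iterated C3det via C8. -/
lemma detIter (x : Tm V) : ∀ (k : ℕ) (s : M.W),
    M.valDep (Tm.iterSet k (fullV V)) (Tm.iter k (Tm.next x)) s := by
  intro k s
  exact C8iter M k (fullV V) fullV_nonempty _ s (M.C3det x (M.g^[k] s))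

/-- Iterated C6. -/
lemma C6iter {P : Pred} : ∀ (m : ℕ) (a : Fin (ar P) → Tm V) (s : M.W),
    (∀ i, m ≤ (a i).depth) →
    (M.valAtom P a s ↔ M.valAtom P (fun i => stripn m (a i)) (M.g^[m] s)) := by
  intro m
  induction m with
  | zero => intro a s h; exact Iff.rfl
  | succ m ih =>
      intro a s h
      have heta : a = fun i => Tm.next (stripn 1 (a i)) := by
        funext i
        exact depth_ge_one_eta (le_trans (Nat.succ_le_succ (Nat.zero_le m)) (h i))
      have h1 : M.valAtom P a s ↔ M.valAtom P (fun i => stripn 1 (a i)) (M.g s) := by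
        conv_lhs => rw [heta]
        exact M.C6 P (fun i => stripn 1 (a i)) s
      rw [h1]
      have h2 := ih (fun i => stripn 1 (a i)) (M.g s) (by
        intro i
        rw [depth_stripn_one (le_trans (Nat.succ_le_succ (Nat.zero_le m)) (h i))]
        have := h i; omega)
      have h2' : M.valAtom P (fun i => stripn 1 (a i)) (M.g s) ↔
          M.valAtom P (fun i => stripn m (stripn 1 (a i))) (M.g^[m] (M.g s)) := h2
      have e1 : (fun i : Fin (ar P) => stripn m (stripn 1 (a i)))
          = (fun i => stripn (m + 1) (a i)) := funext fun i => stripn_one_stripn m (a i)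
      rw [h2', e1, ← Function.iterate_succ_apply]

/-- C4 for a single target term, as an iff. -/
lemma C4iff {S : Finset (Tm V)} (hS : S.Nonempty) {u v : M.W} (h : M.eq S u v) (y : Tm V) :
    M.valDep S y u ↔ M.valDep S y v := by
  constructor
  · intro hd
    exact (M.C4 S {y} u v hS (Finset.singleton_nonempty y) h
      (by intro z hz; rw [Finset.mem_singleton] at hz; subst hz; exact hd)).1 y
      (Finset.mem_singleton_self y)
  · intro hd
    exact (M.C4 S {y} v u hS (Finset.singleton_nonempty y) ((M.C2 S hS).symm h)
      (by intro z hz; rw [Finset.mem_singleton] at hz; subst hz; exact hd)).1 y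
      (Finset.mem_singleton_self y)

/-- C5 as an iff. -/
lemma C5iff {P : Pred} {a : Fin (ar P) → Tm V} {S : Finset (Tm V)} (hS : S.Nonempty)
    {u v : M.W} (h : M.eq S u v) (ha : ∀ i, a i ∈ S) :
    M.valAtom P a u ↔ M.valAtom P a v :=
  ⟨M.C5 P a S u v hS h ha, M.C5 P a S v u hS ((M.C2 S hS).symm h) ha⟩

/-- Truth of dependence quantified formulas is invariant under `=_S`. -/
lemma dqInv {S : Finset (Tm V)} (hS : S.Nonempty) {u v : M.W} (h : M.eq S u v)
    (ψ : Fm V Pred ar) :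
    (M.toGRKripke.sat (Fm.dquant S ψ) u ↔ M.toGRKripke.sat (Fm.dquant S ψ) v) := by
  show (∀ t, M.eq S u t → M.toGRKripke.sat ψ t) ↔ ∀ t, M.eq S v t → M.toGRKripke.sat ψ t
  constructor
  · intro hh t ht
    exact hh t ((M.C2 S hS).trans h ht)
  · intro hh t ht
    exact hh t ((M.C2 S hS).trans ((M.C2 S hS).symm h) ht)

variable (s0 : M.W)

/-- The hull of `s0`: all states reachable by `g`-steps and `=_X`-jumps. -/
inductive Hull : M.W → Prop where
  | refl : Hull s0
  | step_g {s} : Hull s → Hull (M.g s)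
  | step_eq {s t} {X : Finset (Tm V)} : Hull s → X.Nonempty → M.eq X s t → Hull t

/-- Nullary atoms are invariant along one `g`-step. -/
lemma null_g {P : Pred} (h0 : ar P = 0) (a : Fin (ar P) → Tm V) (s : M.W) :
    M.valAtom P a s ↔ M.valAtom P a (M.g s) := by
  have := M.C6 P a s
  rwa [empty_fun_ext h0 (fun i => Tm.next (a i)) a] at this

/-- Nullary atoms are constant on the hull. -/
lemma null_hull {P : Pred} (h0 : ar P = 0) (a : Fin (ar P) → Tm V) {s : M.W}
    (hs : Hull M s0 s) : M.valAtom P a s ↔ M.valAtom P a s0 := by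
  induction hs with
  | refl => exact Iff.rfl
  | step_g hs ih => rw [← null_g M h0 a, ih]
  | step_eq hs hX he ih =>
      rw [← ih]
      exact Iff.symm (C5iff M hX he (fun i => absurd i.2 (by omega)))

end FMPaux

namespace FMPaux
set_option linter.unusedSectionVars false
set_option linter.unusedVariables false
set_option maxHeartbeats 1000000

variable {V Pred : Type} [DecidableEq V] [Fintype V] [Inhabited V] {ar : Pred → ℕ}

/-- Syntactic dependence closure generated by a family `F` of facts indexed by time-shift. -/
inductive Cl (F : ℕ → Finset (Tm V) → Tm V → Prop) (X : Finset (Tm V)) : Tm V → Prop where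
  | base {y} : y ∈ X → Cl F X y
  | fact {k : ℕ} {Z : Finset (Tm V)} {y : Tm V} : F k Z y →
      (∀ z ∈ Tm.iterSet k Z, Cl F X z) → Cl F X (Tm.iter k y)
  | det (k : ℕ) (x : Tm V) : (∀ z ∈ Tm.iterSet k (fullV V), Cl F X z) →
      Cl F X (Tm.iter k (Tm.next x))

/-- Transitivity of the closure. -/
lemma Cl_trans {F : ℕ → Finset (Tm V) → Tm V → Prop} {X Y : Finset (Tm V)}
    (hY : ∀ y ∈ Y, Cl F X y) {z : Tm V} (hz : Cl F Y z) : Cl F X z := by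
  induction hz with
  | base h => exact hY _ h
  | fact hf hp ih => exact Cl.fact hf ih
  | det k x hp ih => exact Cl.det k x ih

/-- Shifting the closure by `○`. -/
lemma Cl_shift {F F' : ℕ → Finset (Tm V) → Tm V → Prop}
    (hFF : ∀ k Z y, F' k Z y → F (k + 1) Z y) {X : Finset (Tm V)} {y : Tm V}
    (h : Cl F' X y) : Cl F (Tm.nextSet X) (Tm.next y) := by
  induction h with
  | base h => exact Cl.base (Finset.mem_image_of_mem _ h)
  | @fact k Z y hf hp ih =>
      have : Cl F (Tm.nextSet X) (Tm.iter (k + 1) y) := by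
        apply Cl.fact (hFF _ _ _ hf)
        intro z hz
        rw [iterSet_succ] at hz
        obtain ⟨z', hz', rfl⟩ := Finset.mem_image.1 hz
        exact ih z' hz'
      exact this
  | det k x hp ih =>
      have : Cl F (Tm.nextSet X) (Tm.iter (k + 1) (Tm.next x)) := by
        apply Cl.det (k + 1) x
        intro z hz
        rw [iterSet_succ] at hz
        obtain ⟨z', hz', rfl⟩ := Finset.mem_image.1 hz
        exact ih z' hz'
      exact this

/-- Soundness of the closure with respect to a model. -/
lemma Cl_sound (M : GRModelNE V Pred ar) {F : ℕ → Finset (Tm V) → Tm V → Prop} {s : M.W}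
    (hF : ∀ k Z y, F k Z y → Z.Nonempty ∧ M.valDep Z y (M.g^[k] s))
    {X : Finset (Tm V)} (hX : X.Nonempty) {y : Tm V} (h : Cl F X y) :
    M.valDep X y s := by
  induction h with
  | base h => exact M.C3ref X _ h s
  | @fact k Z y hf hp ih =>
      obtain ⟨hZ, hval⟩ := hF _ _ _ hf
      have h1 : M.valDep (Tm.iterSet k Z) (Tm.iter k y) s := C8iter M k Z hZ y s hval
      exact M.C3trans X (Tm.iterSet k Z) {Tm.iter k y} s hX (iterSet_nonempty hZ) ih
        (by intro z hz; rw [Finset.mem_singleton] at hz; subst hz; exact h1) _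
        (Finset.mem_singleton_self _)
  | det k x hp ih =>
      exact M.C3trans X (Tm.iterSet k (fullV V)) {Tm.iter k (Tm.next x)} s hX
        (iterSet_nonempty fullV_nonempty) ih
        (by intro z hz; rw [Finset.mem_singleton] at hz; subst hz; exact detIter M x k s) _
        (Finset.mem_singleton_self _)

/-- Transferring the closure to another fact family. -/
lemma Cl_transfer {F F' : ℕ → Finset (Tm V) → Tm V → Prop} {X : Finset (Tm V)}
    (hFF : ∀ k Z y, F k Z y → (∀ z ∈ Tm.iterSet k Z, Cl F' X z) → F' k Z y)
    {y : Tm V} (h : Cl F X y) : Cl F' X y := by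
  induction h with
  | base h => exact Cl.base h
  | fact hf hp ih => exact Cl.fact (hFF _ _ _ hf ih) ih
  | det k x hp ih => exact Cl.det k x ih

end FMPaux

namespace FMPaux
set_option linter.unusedSectionVars false
set_option linter.unusedVariables false
set_option maxHeartbeats 1000000

variable {V Pred : Type} [DecidableEq V] [Fintype V] [Inhabited V] {ar : Pred → ℕ}

/-- The finite data recorded about a state. -/
def BD (φ : Fm V Pred ar) : Type :=
  ({X // X ∈ idxs φ} → {ψ // ψ ∈ subs φ} → Prop) ×
  ({S // S ∈ RelSets φ} → {y // y ∈ RTm φ} → Prop) ×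
  ({pa // pa ∈ RAtoms φ} → Prop)

instance BD_finite (φ : Fm V Pred ar) : Finite (BD φ) := by
  haveI h1 : Finite {X // X ∈ idxs φ} := (List.finite_toSet (idxs φ)).to_subtype
  haveI h2 : Finite {ψ // ψ ∈ subs φ} := (List.finite_toSet (subs φ)).to_subtype
  haveI h3 : Finite {S // S ∈ RelSets φ} := (List.finite_toSet (RelSets φ)).to_subtype
  haveI h4 : Finite {y // y ∈ RTm φ} := (List.finite_toSet (RTm φ)).to_subtype
  haveI h5 : Finite {pa // pa ∈ RAtoms φ} := (List.finite_toSet (RAtoms φ)).to_subtype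
  unfold BD
  infer_instance

variable (M : GRModelNE V Pred ar) (s0 : M.W) (φ : Fm V Pred ar)

/-- The data recorded about a state. -/
def Base (s : M.W) : BD φ :=
  ⟨fun X ψ => M.toGRKripke.sat (Fm.dquant X.1 ψ.1) s,
   fun S y => M.valDep S.1 y.1 s,
   fun pa => M.valAtom pa.1.1 pa.1.2 s⟩

/-- The worlds of the finite model. -/
abbrev Wld : Type :=
  Option ((j : Fin (nn φ)) × (Fin (nn φ + 1 - (j : ℕ)) → BD φ))

instance Wld_finite : Finite (Wld φ) := by
  unfold Wld
  haveI : Finite ((j : Fin (nn φ)) × (Fin (nn φ + 1 - (j : ℕ)) → BD φ)) := Finite.instSigma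
  apply Finite.of_equiv _ (Equiv.optionEquivSumPUnit.{0,0} _).symm

instance Wld_nonempty : Nonempty (Wld φ) := ⟨none⟩

/-- The transition function of the finite model. -/
def gN (w : Wld φ) : Wld φ :=
  w.elim none fun p =>
    if h : (p.1 : ℕ) + 1 < nn φ then
      some ⟨⟨(p.1 : ℕ) + 1, h⟩, fun i =>
        p.2 ⟨(i : ℕ) + 1, by
          have hi : (i : ℕ) < nn φ + 1 - ((p.1 : ℕ) + 1) := i.isLt
          have := p.1.isLt
          omega⟩⟩
    else none

lemma gN_none : gN φ (none : Wld φ) = none := rfl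

lemma gN_some_pos (j : Fin (nn φ)) (τ : Fin (nn φ + 1 - (j : ℕ)) → BD φ)
    (hj : (j : ℕ) + 1 < nn φ) :
    gN φ (some ⟨j, τ⟩) = some ⟨⟨(j : ℕ) + 1, hj⟩, fun i =>
      τ ⟨(i : ℕ) + 1, by
        have hi : (i : ℕ) < nn φ + 1 - ((j : ℕ) + 1) := i.isLt
        have := j.isLt
        omega⟩⟩ :=
  dif_pos hj

lemma gN_some_neg (j : Fin (nn φ)) (τ : Fin (nn φ + 1 - (j : ℕ)) → BD φ)
    (hj : ¬ (j : ℕ) + 1 < nn φ) :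
    gN φ (some ⟨j, τ⟩) = none :=
  dif_neg hj

/-- The canonical world for a state of `M` at level `j`. -/
def worldOf (j : Fin (nn φ)) (s : M.W) : Wld φ :=
  some ⟨j, fun i : Fin (nn φ + 1 - (j : ℕ)) => Base M φ (M.g^[(i : ℕ)] s)⟩

/-- Recorded dependence facts at a (non-final) world. -/
def Fw (p : (j : Fin (nn φ)) × (Fin (nn φ + 1 - (j : ℕ)) → BD φ))
    (k : ℕ) (Z : Finset (Tm V)) (y : Tm V) : Prop :=
  ∃ (hk : k + (p.1 : ℕ) ≤ nn φ - 1) (hZ : Z ∈ RelSets φ) (hy : y ∈ RTm φ),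
    (p.2 ⟨k, by have := p.1.isLt; omega⟩).2.1 ⟨Z, hZ⟩ ⟨y, hy⟩

/-- Recorded dependence facts at any world. -/
def FF : Wld φ → ℕ → Finset (Tm V) → Tm V → Prop
  | none => fun _ _ _ => False
  | some p => Fw φ p

/-- Dependence valuation of the finite model. -/
def valDepN (X : Finset (Tm V)) (y : Tm V) (w : Wld φ) : Prop := Cl (FF φ w) X y

/-- Core atom valuation. -/
def Acore (w : Wld φ) (P : Pred) (a : Fin (ar P) → Tm V) : Prop :=
  if ar P = 0 then
    ((⟨P, a⟩ : (P : Pred) × (Fin (ar P) → Tm V)) ∈ RAtoms φ ∧ M.valAtom P a s0)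
  else
    w.elim ((⟨P, a⟩ : (P : Pred) × (Fin (ar P) → Tm V)) ∈ RAtoms φ ∧ M.valAtom P a s0)
      fun p => ∃ h : (⟨P, a⟩ : (P : Pred) × (Fin (ar P) → Tm V)) ∈ RAtoms φ,
        (p.2 ⟨0, by have := p.1.isLt; omega⟩).2.2 ⟨⟨P, a⟩, h⟩

/-- Atom valuation of the finite model. -/
def valAtomN (P : Pred) (a : Fin (ar P) → Tm V) (w : Wld φ) : Prop :=
  Acore M s0 φ ((gN φ)^[md a] w) P (fun i => stripn (md a) (a i))

/-- Realized worlds. -/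
def RealW : Wld φ → Prop
  | none => True
  | some p => ∃ s, Hull M s0 s ∧ p.2 = fun i : Fin (nn φ + 1 - (p.1 : ℕ)) => Base M φ (M.g^[(i : ℕ)] s)

/-- Realizedness handshake along all futures. -/
def HS (w w' : Wld φ) : Prop :=
  ∀ k : ℕ, (RealW M s0 φ ((gN φ)^[k] w) ↔ RealW M s0 φ ((gN φ)^[k] w'))

/-- Agreement of recorded invariants for a relevant set `S`. -/
def IA (S : Finset (Tm V)) (hS : S ∈ RelSets φ) (b b' : BD φ) : Prop :=
  (∀ (hX : S ∈ idxs φ) (ψ : Fm V Pred ar) (hψ : ψ ∈ subs φ),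
    (b.1 ⟨S, hX⟩ ⟨ψ, hψ⟩ ↔ b'.1 ⟨S, hX⟩ ⟨ψ, hψ⟩)) ∧
  (∀ (y : Tm V) (hy : y ∈ RTm φ),
    (b.2.1 ⟨S, hS⟩ ⟨y, hy⟩ ↔ b'.2.1 ⟨S, hS⟩ ⟨y, hy⟩)) ∧
  (∀ (pa : (P : Pred) × (Fin (ar P) → Tm V)) (hpa : pa ∈ RAtoms φ),
    (∀ i, pa.2 i ∈ S) → (b.2.2 ⟨pa, hpa⟩ ↔ b'.2.2 ⟨pa, hpa⟩))

/-- Conditional agreement of two worlds relative to `X`. -/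
def CondAg (j : Fin (nn φ)) (τ τ' : Fin (nn φ + 1 - (j : ℕ)) → BD φ)
    (X : Finset (Tm V)) : Prop :=
  ∀ (k : ℕ) (hk : k + (j : ℕ) ≤ nn φ - 1) (S : Finset (Tm V)) (hS : S ∈ RelSets φ),
    ((∀ z ∈ Tm.iterSet k S, Cl (Fw φ ⟨j, τ⟩) X z) ∨
     (∀ z ∈ Tm.iterSet k S, Cl (Fw φ ⟨j, τ'⟩) X z)) →
    IA φ S hS (τ ⟨k, by have := j.isLt; omega⟩) (τ' ⟨k, by have := j.isLt; omega⟩)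

/-- The equality relations of the finite model. -/
def eqN (X : Finset (Tm V)) (w w' : Wld φ) : Prop :=
  (w = none ∧ w' = none) ∨
  ∃ (j : Fin (nn φ)) (τ τ' : Fin (nn φ + 1 - (j : ℕ)) → BD φ),
    w = some ⟨j, τ⟩ ∧ w' = some ⟨j, τ'⟩ ∧ HS M s0 φ w w' ∧ CondAg φ j τ τ' X

/- ---------------- structural lemmas ---------------- -/

lemma gN_none_iter : ∀ k : ℕ, (gN φ)^[k] (none : Wld φ) = none := by
  intro k
  induction k with
  | zero => rfl
  | succ k ih => rw [Function.iterate_succ_apply, gN_none, ih]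

lemma FF_gN : ∀ (w : Wld φ) (k : ℕ) (Z : Finset (Tm V)) (y : Tm V),
    FF φ (gN φ w) k Z y → FF φ w (k + 1) Z y := by
  intro w k Z y h
  match w with
  | none => exact absurd h (fun h => h)
  | some ⟨j, τ⟩ =>
      by_cases hj : (j : ℕ) + 1 < nn φ
      · rw [gN_some_pos φ j τ hj] at h
        obtain ⟨hk, hZ, hy, hd⟩ := h
        have hk2 : k + ((j : ℕ) + 1) ≤ nn φ - 1 := hk
        refine ⟨show k + 1 + (j : ℕ) ≤ nn φ - 1 by omega, hZ, hy, ?_⟩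
        exact hd
      · rw [gN_some_neg φ j τ hj] at h
        exact absurd h (fun h => h)

lemma gN_worldOf {j : Fin (nn φ)} (hj : (j : ℕ) + 1 < nn φ) (s : M.W) :
    gN φ (worldOf M φ j s) = worldOf M φ ⟨(j : ℕ) + 1, hj⟩ (M.g s) := by
  rw [show worldOf M φ j s
      = some ⟨j, fun i : Fin (nn φ + 1 - (j : ℕ)) => Base M φ (M.g^[(i : ℕ)] s)⟩ from rfl]
  rw [gN_some_pos φ j _ hj]
  exact congrArg (fun f => (some ⟨⟨(j : ℕ) + 1, hj⟩, f⟩ : Wld φ))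
    (funext fun i => congrArg (Base M φ) (Function.iterate_succ_apply M.g (i : ℕ) s))

lemma gN_worldOf_iter : ∀ (m : ℕ) (j j' : Fin (nn φ)), ((j' : ℕ) = (j : ℕ) + m) →
    ((j : ℕ) + m ≤ nn φ - 1) → ∀ s : M.W,
    (gN φ)^[m] (worldOf M φ j s) = worldOf M φ j' (M.g^[m] s) := by
  intro m
  induction m with
  | zero =>
      intro j j' hj' hb s
      have : j' = j := Fin.ext (by omega)
      subst this
      rfl
  | succ m ih =>
      intro j j' hj' hb s
      rw [Function.iterate_succ_apply]
      have h1 : (j : ℕ) + 1 < nn φ := by have := j.isLt; omega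
      rw [gN_worldOf M φ h1 s]
      rw [ih ⟨(j : ℕ) + 1, h1⟩ j' (by show (j' : ℕ) = (j : ℕ) + 1 + m; omega)
        (by show (j : ℕ) + 1 + m ≤ nn φ - 1; omega) (M.g s)]
      rw [← Function.iterate_succ_apply]

lemma gN_iter_none : ∀ (m : ℕ) (j : Fin (nn φ))
    (τ : Fin (nn φ + 1 - (j : ℕ)) → BD φ), (nn φ - 1 < (j : ℕ) + m) →
    (gN φ)^[m] (some ⟨j, τ⟩ : Wld φ) = none := by
  intro m
  induction m with
  | zero =>
      intro j τ hb
      exact absurd hb (by have := j.isLt; omega)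
  | succ m ih =>
      intro j τ hb
      rw [Function.iterate_succ_apply]
      by_cases hj : (j : ℕ) + 1 < nn φ
      · rw [gN_some_pos φ j τ hj]
        exact ih ⟨(j : ℕ) + 1, hj⟩ _ (by show nn φ - 1 < (j : ℕ) + 1 + m; omega)
      · rw [gN_some_neg φ j τ hj]
        exact gN_none_iter φ m

lemma acore_iter : ∀ (m : ℕ) (j : Fin (nn φ)) (τ : Fin (nn φ + 1 - (j : ℕ)) → BD φ)
    (hb : (j : ℕ) + m ≤ nn φ - 1) (P : Pred) (a : Fin (ar P) → Tm V)
    (h0 : ¬ ar P = 0) (hm : (⟨P, a⟩ : (P : Pred) × (Fin (ar P) → Tm V)) ∈ RAtoms φ),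
    (Acore M s0 φ ((gN φ)^[m] (some ⟨j, τ⟩)) P a ↔
      (τ ⟨m, by have := j.isLt; omega⟩).2.2 ⟨⟨P, a⟩, hm⟩) := by
  intro m
  induction m with
  | zero =>
      intro j τ hb P a h0 hm
      show Acore M s0 φ (some ⟨j, τ⟩) P a ↔ _
      unfold Acore
      rw [if_neg h0]
      constructor
      · rintro ⟨h, hd⟩; exact hd
      · intro hd; exact ⟨hm, hd⟩
  | succ m ih =>
      intro j τ hb P a h0 hm
      rw [Function.iterate_succ_apply]
      have h1 : (j : ℕ) + 1 < nn φ := by have := j.isLt; omega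
      rw [gN_some_pos φ j τ h1]
      exact ih ⟨(j : ℕ) + 1, h1⟩ _ (by show (j : ℕ) + 1 + m ≤ nn φ - 1; omega) P a h0 hm

lemma RealW_pres (w : Wld φ) (h : RealW M s0 φ w) : RealW M s0 φ (gN φ w) := by
  match w with
  | none => exact trivial
  | some ⟨j, τ⟩ =>
      obtain ⟨s, hs, hτ⟩ := h
      have hτ' : τ = fun i : Fin (nn φ + 1 - (j : ℕ)) => Base M φ (M.g^[(i : ℕ)] s) := hτ
      subst hτ'
      by_cases hj : (j : ℕ) + 1 < nn φ
      · rw [show (some ⟨j, fun i : Fin (nn φ + 1 - (j : ℕ)) => Base M φ (M.g^[(i : ℕ)] s)⟩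
            : Wld φ) = worldOf M φ j s from rfl]
        rw [gN_worldOf M φ hj s]
        exact ⟨M.g s, Hull.step_g hs, rfl⟩
      · rw [gN_some_neg φ j _ hj]
        exact trivial

lemma RealW_worldOf_iter (j : Fin (nn φ)) {s : M.W} (hs : Hull M s0 s) (k : ℕ) :
    RealW M s0 φ ((gN φ)^[k] (worldOf M φ j s)) := by
  induction k with
  | zero => exact ⟨s, hs, rfl⟩
  | succ k ih =>
      rw [Function.iterate_succ_apply']
      exact RealW_pres M s0 φ _ ih

end FMPaux

namespace FMPaux
set_option linter.unusedSectionVars false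
set_option linter.unusedVariables false
set_option maxHeartbeats 1000000

variable {V Pred : Type} [DecidableEq V] [Fintype V] [Inhabited V] {ar : Pred → ℕ}
variable (M : GRModelNE V Pred ar) (s0 : M.W) (φ : Fm V Pred ar)

/- ---------------- condition C6 ---------------- -/

lemma acore_mem {w : Wld φ} {P : Pred} {a : Fin (ar P) → Tm V}
    (h : Acore M s0 φ w P a) : (⟨P, a⟩ : (P : Pred) × (Fin (ar P) → Tm V)) ∈ RAtoms φ := by
  unfold Acore at h
  by_cases h0 : ar P = 0
  · rw [if_pos h0] at h; exact h.1
  · rw [if_neg h0] at h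
    match w with
    | none => exact h.1
    | some p => exact h.1

lemma C6N (P : Pred) (a : Fin (ar P) → Tm V) (w : Wld φ) :
    valAtomN M s0 φ P (fun i => Tm.next (a i)) w ↔ valAtomN M s0 φ P a (gN φ w) := by
  by_cases h0 : ar P = 0
  · have hmd1 : md (fun i => Tm.next (a i)) = 0 := md_eq_zero h0 _
    have hmd2 : md a = 0 := md_eq_zero h0 _
    have hfa : (fun i => Tm.next (a i)) = a := empty_fun_ext h0 _ _
    unfold valAtomN
    rw [hmd1, hmd2, hfa]
    show Acore M s0 φ w P (fun i => stripn 0 (a i)) ↔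
      Acore M s0 φ (gN φ w) P (fun i => stripn 0 (a i))
    unfold Acore
    rw [if_pos h0, if_pos h0]
  · have hmd : md (fun i => Tm.next (a i)) = md a + 1 := md_next h0 a
    unfold valAtomN
    rw [hmd]
    have hfe : (fun i => stripn (md a + 1) (Tm.next (a i))) = (fun i => stripn (md a) (a i)) :=
      funext fun i => stripn_next _ _
    rw [hfe, Function.iterate_succ_apply]

/- ---------------- conditions C3 ---------------- -/

lemma C3refN (X : Finset (Tm V)) (x : Tm V) (hx : x ∈ X) (w : Wld φ) :
    valDepN φ X x w := Cl.base hx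

lemma C3transN (X Y Z : Finset (Tm V)) (w : Wld φ)
    (h1 : ∀ y ∈ Y, valDepN φ X y w) (h2 : ∀ z ∈ Z, valDepN φ Y z w) :
    ∀ z ∈ Z, valDepN φ X z w :=
  fun z hz => Cl_trans h1 (h2 z hz)

lemma C3detN (x : Tm V) (w : Wld φ) : valDepN φ (fullV V) (Tm.next x) w := by
  have h := Cl.det (F := FF φ w) (X := fullV V) 0 x (fun z hz => Cl.base hz)
  exact h

/- ---------------- condition C8 ---------------- -/

lemma C8N (X Y : Finset (Tm V)) (w : Wld φ)
    (hd : ∀ y ∈ Y, valDepN φ X y (gN φ w)) :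
    ∀ y' ∈ Tm.nextSet Y, valDepN φ (Tm.nextSet X) y' w := by
  intro y' hy'
  obtain ⟨y, hy, rfl⟩ := Finset.mem_image.1 hy'
  exact Cl_shift (fun k Z z hf => FF_gN φ w k Z z hf) (hd y hy)

/- ---------------- equivalence machinery ---------------- -/

lemma IA_refl {S : Finset (Tm V)} (hS : S ∈ RelSets φ) (b : BD φ) : IA φ S hS b b :=
  ⟨fun _ _ _ => Iff.rfl, fun _ _ => Iff.rfl, fun _ _ _ => Iff.rfl⟩

lemma IA_symm {S : Finset (Tm V)} {hS : S ∈ RelSets φ} {b b' : BD φ}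
    (h : IA φ S hS b b') : IA φ S hS b' b :=
  ⟨fun hX ψ hψ => (h.1 hX ψ hψ).symm, fun y hy => (h.2.1 y hy).symm,
   fun pa hpa hin => (h.2.2 pa hpa hin).symm⟩

lemma IA_trans {S : Finset (Tm V)} {hS : S ∈ RelSets φ} {b b' b'' : BD φ}
    (h1 : IA φ S hS b b') (h2 : IA φ S hS b' b'') : IA φ S hS b b'' :=
  ⟨fun hX ψ hψ => (h1.1 hX ψ hψ).trans (h2.1 hX ψ hψ),
   fun y hy => (h1.2.1 y hy).trans (h2.2.1 y hy),
   fun pa hpa hin => (h1.2.2 pa hpa hin).trans (h2.2.2 pa hpa hin)⟩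

lemma condAg_symm {j : Fin (nn φ)} {τ τ' : Fin (nn φ + 1 - (j : ℕ)) → BD φ}
    {X : Finset (Tm V)} (h : CondAg φ j τ τ' X) : CondAg φ j τ' τ X := by
  intro k hk S hS hdis
  exact IA_symm φ (h k hk S hS hdis.symm)

/-- Cl transfer along conditional agreement. -/
lemma clT {j : Fin (nn φ)} {τ τ' : Fin (nn φ + 1 - (j : ℕ)) → BD φ}
    {X : Finset (Tm V)} (hca : CondAg φ j τ τ' X) :
    ∀ y, Cl (Fw φ ⟨j, τ⟩) X y → Cl (Fw φ ⟨j, τ'⟩) X y := by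
  intro y h
  refine Cl_transfer ?_ h
  intro k Z y' hf hprem
  obtain ⟨hk, hZ, hy, hd⟩ := hf
  have hk' : k + (j : ℕ) ≤ nn φ - 1 := hk
  have hIA := hca k hk' Z hZ (Or.inr hprem)
  exact ⟨hk, hZ, hy, (hIA.2.1 y' hy).mp hd⟩

lemma eqN_refl (X : Finset (Tm V)) (w : Wld φ) : eqN M s0 φ X w w := by
  match w with
  | none => exact Or.inl ⟨rfl, rfl⟩
  | some ⟨j, τ⟩ =>
      exact Or.inr ⟨j, τ, τ, rfl, rfl, fun k => Iff.rfl,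
        fun k hk S hS _ => IA_refl φ hS _⟩

lemma eqN_symm {X : Finset (Tm V)} {w w' : Wld φ} (h : eqN M s0 φ X w w') :
    eqN M s0 φ X w' w := by
  rcases h with ⟨h1, h2⟩ | ⟨j, τ, τ', h1, h2, hhs, hca⟩
  · exact Or.inl ⟨h2, h1⟩
  · exact Or.inr ⟨j, τ', τ, h2, h1, fun k => (hhs k).symm, condAg_symm φ hca⟩

lemma eqN_trans {X : Finset (Tm V)} {w w' w'' : Wld φ}
    (h1 : eqN M s0 φ X w w') (h2 : eqN M s0 φ X w' w'') : eqN M s0 φ X w w'' := by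
  rcases h1 with ⟨rfl, rfl⟩ | ⟨j, τ, τ', rfl, rfl, hhs, hca⟩
  · rcases h2 with ⟨-, rfl⟩ | ⟨j, τ, τ', heq, -, -, -⟩
    · exact Or.inl ⟨rfl, rfl⟩
    · exact absurd heq (by simp)
  · rcases h2 with ⟨heq, -⟩ | ⟨j₂, τ₂, τ₂', heq, heq', hhs₂, hca₂⟩
    · exact absurd heq (by simp)
    · rw [Option.some.injEq] at heq
      rcases heq with ⟨⟩
      refine Or.inr ⟨j, τ, τ₂', rfl, heq', fun k => ?_, ?_⟩
      · exact (hhs k).trans (hhs₂ k)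
      · intro k hk S hS hdis
        rcases hdis with hd | hd
        · have hIA1 := hca k hk S hS (Or.inl hd)
          have hd' : ∀ z ∈ Tm.iterSet k S, Cl (Fw φ ⟨j, τ'⟩) X z :=
            fun z hz => clT φ hca z (hd z hz)
          have hIA2 := hca₂ k hk S hS (Or.inl hd')
          exact IA_trans φ hIA1 hIA2
        · have hIA2 := hca₂ k hk S hS (Or.inr hd)
          have hd' : ∀ z ∈ Tm.iterSet k S, Cl (Fw φ ⟨j, τ'⟩) X z :=
            fun z hz => clT φ (condAg_symm φ hca₂) z (hd z hz)
          have hIA1 := hca k hk S hS (Or.inr hd')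
          exact IA_trans φ hIA1 hIA2

lemma C2N (X : Finset (Tm V)) : Equivalence (eqN M s0 φ X) :=
  ⟨eqN_refl M s0 φ X, eqN_symm M s0 φ, eqN_trans M s0 φ⟩

/- ---------------- condition C4 ---------------- -/

lemma C4N (X Y : Finset (Tm V)) (w w' : Wld φ)
    (he : eqN M s0 φ X w w') (hd : ∀ y ∈ Y, valDepN φ X y w) :
    (∀ y ∈ Y, valDepN φ X y w') ∧ eqN M s0 φ Y w w' := by
  rcases he with ⟨rfl, rfl⟩ | ⟨j, τ, τ', rfl, rfl, hhs, hca⟩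
  · exact ⟨hd, Or.inl ⟨rfl, rfl⟩⟩
  · have htr : ∀ y, Cl (Fw φ ⟨j, τ⟩) X y → Cl (Fw φ ⟨j, τ'⟩) X y := clT φ hca
    refine ⟨fun y hy => htr y (hd y hy), Or.inr ⟨j, τ, τ', rfl, rfl, hhs, ?_⟩⟩
    intro k hk S hS hdis
    apply hca k hk S hS
    rcases hdis with hdis | hdis
    · exact Or.inl (fun z hz => Cl_trans hd (hdis z hz))
    · exact Or.inr (fun z hz => Cl_trans (fun y hy => htr y (hd y hy)) (hdis z hz))

/- ---------------- condition C5 ---------------- -/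

lemma C5N (P : Pred) (a : Fin (ar P) → Tm V) (X : Finset (Tm V)) (w w' : Wld φ)
    (he : eqN M s0 φ X w w') (hin : ∀ i, a i ∈ X)
    (hv : valAtomN M s0 φ P a w) : valAtomN M s0 φ P a w' := by
  rcases he with ⟨rfl, rfl⟩ | ⟨j, τ, τ', rfl, rfl, hhs, hca⟩
  · exact hv
  · by_cases h0 : ar P = 0
    · unfold valAtomN at hv ⊢
      unfold Acore at hv ⊢
      rw [if_pos h0] at hv ⊢
      exact hv
    · by_cases hb : (j : ℕ) + md a ≤ nn φ - 1
      · by_cases hmem : (⟨P, fun i => stripn (md a) (a i)⟩ :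
            (P : Pred) × (Fin (ar P) → Tm V)) ∈ RAtoms φ
        · unfold valAtomN at hv ⊢
          rw [acore_iter M s0 φ (md a) j τ hb P _ h0 hmem] at hv
          rw [acore_iter M s0 φ (md a) j τ' hb P _ h0 hmem]
          have hS : argset (fun i => stripn (md a) (a i)) ∈ RelSets φ :=
            argset_mem_RelSets hmem (by show 0 < ar P; omega)
          have hdisj : ∀ z ∈ Tm.iterSet (md a) (argset fun i => stripn (md a) (a i)),
              Cl (Fw φ ⟨j, τ⟩) X z := by
            intro z hz
            rw [iterSet_argset] at hz
            obtain ⟨i, -, rfl⟩ := Finset.mem_image.1 hz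
            have : Tm.iter (md a) (stripn (md a) (a i)) = a i :=
              iter_stripn (md a) (a i) (md_le a i)
            rw [this]
            exact Cl.base (hin i)
          have hIA := hca (md a) (by omega) _ hS (Or.inl hdisj)
          exact (hIA.2.2 ⟨P, fun i => stripn (md a) (a i)⟩ hmem
            (fun i => Finset.mem_image_of_mem _ (Finset.mem_univ i))).mp hv
        · exfalso
          exact hmem (acore_mem M s0 φ hv)
      · unfold valAtomN at hv ⊢
        rw [gN_iter_none φ (md a) j τ (by omega)] at hv
        rw [gN_iter_none φ (md a) j τ' (by omega)]
        exact hv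

/- ---------------- condition C7 ---------------- -/

lemma C7N (X : Finset (Tm V)) (w w' : Wld φ)
    (he : eqN M s0 φ (Tm.nextSet X) w w') : eqN M s0 φ X (gN φ w) (gN φ w') := by
  rcases he with ⟨rfl, rfl⟩ | ⟨j, τ, τ', rfl, rfl, hhs, hca⟩
  · exact Or.inl ⟨rfl, rfl⟩
  · by_cases hj : (j : ℕ) + 1 < nn φ
    · rw [gN_some_pos φ j τ hj, gN_some_pos φ j τ' hj]
      refine Or.inr ⟨⟨(j : ℕ) + 1, hj⟩, _, _, rfl, rfl, ?_, ?_⟩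
      · intro k
        rw [← gN_some_pos φ j τ hj, ← gN_some_pos φ j τ' hj,
          ← Function.iterate_succ_apply, ← Function.iterate_succ_apply]
        exact hhs (k + 1)
      · intro k hk S hS hdis
        have hk2 : (k + 1) + (j : ℕ) ≤ nn φ - 1 := by
          have h' : k + ((j : ℕ) + 1) ≤ nn φ - 1 := hk
          omega
        have hshift1 : ∀ k' Z y, Fw φ ⟨⟨(j : ℕ) + 1, hj⟩, fun i =>
            τ ⟨(i : ℕ) + 1, by
              have hi : (i : ℕ) < nn φ + 1 - ((j : ℕ) + 1) := i.isLt
              have := j.isLt; omega⟩⟩ k' Z y → Fw φ ⟨j, τ⟩ (k' + 1) Z y := by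
          intro k' Z y hf
          apply FF_gN φ (some ⟨j, τ⟩) k' Z y
          rw [gN_some_pos φ j τ hj]
          exact hf
        have hshift2 : ∀ k' Z y, Fw φ ⟨⟨(j : ℕ) + 1, hj⟩, fun i =>
            τ' ⟨(i : ℕ) + 1, by
              have hi : (i : ℕ) < nn φ + 1 - ((j : ℕ) + 1) := i.isLt
              have := j.isLt; omega⟩⟩ k' Z y → Fw φ ⟨j, τ'⟩ (k' + 1) Z y := by
          intro k' Z y hf
          apply FF_gN φ (some ⟨j, τ'⟩) k' Z y
          rw [gN_some_pos φ j τ' hj]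
          exact hf
        have hIA := hca (k + 1) hk2 S hS (by
          rcases hdis with hd | hd
          · refine Or.inl ?_
            intro z hz
            rw [iterSet_succ] at hz
            obtain ⟨z', hz', rfl⟩ := Finset.mem_image.1 hz
            exact Cl_shift hshift1 (hd z' hz')
          · refine Or.inr ?_
            intro z hz
            rw [iterSet_succ] at hz
            obtain ⟨z', hz', rfl⟩ := Finset.mem_image.1 hz
            exact Cl_shift hshift2 (hd z' hz'))
        exact hIA
    · rw [gN_some_neg φ j τ hj, gN_some_neg φ j τ' hj]
      exact Or.inl ⟨rfl, rfl⟩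

end FMPaux

namespace FMPaux
set_option linter.unusedSectionVars false
set_option linter.unusedVariables false
set_option maxHeartbeats 1000000

variable {V Pred : Type} [DecidableEq V] [Fintype V] [Inhabited V] {ar : Pred → ℕ}
variable (M : GRModelNE V Pred ar) (s0 : M.W) (φ : Fm V Pred ar)

lemma acore_worldOf (j : Fin (nn φ)) (s' : M.W) {P : Pred} {a₀ : Fin (ar P) → Tm V}
    (h0 : ¬ ar P = 0)
    (hmem : (⟨P, a₀⟩ : (P : Pred) × (Fin (ar P) → Tm V)) ∈ RAtoms φ) :
    Acore M s0 φ (worldOf M φ j s') P a₀ ↔ M.valAtom P a₀ s' := by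
  unfold Acore
  rw [if_neg h0]
  show (∃ _h : (⟨P, a₀⟩ : (P : Pred) × (Fin (ar P) → Tm V)) ∈ RAtoms φ,
    M.valAtom P a₀ (M.g^[(0 : ℕ)] s')) ↔ M.valAtom P a₀ s'
  constructor
  · rintro ⟨-, h⟩; exact h
  · intro h; exact ⟨hmem, h⟩

/-- M-equivalent hull states give `eqN`-equivalent canonical worlds. -/
lemma eq_worldOf (hφ : φ.neIdx) {X : Finset (Tm V)} (hX : X.Nonempty) {s t : M.W}
    (hs : Hull M s0 s) (ht : Hull M s0 t) (hst : M.eq X s t) (j : Fin (nn φ)) :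
    eqN M s0 φ X (worldOf M φ j s) (worldOf M φ j t) := by
  refine Or.inr ⟨j, _, _, rfl, rfl, ?_, ?_⟩
  · intro k
    constructor
    · intro _; exact RealW_worldOf_iter M s0 φ j ht k
    · intro _; exact RealW_worldOf_iter M s0 φ j hs k
  · intro k hk S hS hdis
    have hSne : S.Nonempty := RelSets_nonempty hφ hS
    have key : M.eq (Tm.iterSet k S) s t := by
      rcases hdis with hd | hd
      · have hsound : ∀ z ∈ Tm.iterSet k S, M.valDep X z s := by
          intro z hz
          refine Cl_sound M ?_ hX (hd z hz)
          intro k' Z y hf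
          obtain ⟨hk', hZ, hy, hdata⟩ := hf
          exact ⟨RelSets_nonempty hφ hZ, hdata⟩
        exact (M.C4 X (Tm.iterSet k S) s t hX (iterSet_nonempty hSne) hst hsound).2
      · have hsound : ∀ z ∈ Tm.iterSet k S, M.valDep X z t := by
          intro z hz
          refine Cl_sound M ?_ hX (hd z hz)
          intro k' Z y hf
          obtain ⟨hk', hZ, hy, hdata⟩ := hf
          exact ⟨RelSets_nonempty hφ hZ, hdata⟩
        exact (M.C2 _ (iterSet_nonempty hSne)).symm
          (M.C4 X (Tm.iterSet k S) t s hX (iterSet_nonempty hSne)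
            ((M.C2 X hX).symm hst) hsound).2
    have hkey := C7iter M hSne k s t key
    refine ⟨?_, ?_, ?_⟩
    · intro hXidx ψ hψ
      exact dqInv M hSne hkey ψ
    · intro y hy
      exact C4iff M hSne hkey y
    · intro pa hpa hin
      exact C5iff M hSne hkey hin

/-- The Kripke frame of the finite model. -/
def KN : GRKripke V Pred ar where
  W := Wld φ
  nonempty := ⟨none⟩
  g := gN φ
  eq := eqN M s0 φ
  valAtom := valAtomN M s0 φ
  valDep := valDepN φ

lemma mem_subs_neg {φ ψ : Fm V Pred ar} (h : Fm.neg ψ ∈ subs φ) : ψ ∈ subs φ :=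
  subs_closed h (List.mem_cons_of_mem _ (subs_self ψ))

lemma mem_subs_next {φ ψ : Fm V Pred ar} (h : Fm.next ψ ∈ subs φ) : ψ ∈ subs φ :=
  subs_closed h (List.mem_cons_of_mem _ (subs_self ψ))

lemma mem_subs_dquant {φ ψ : Fm V Pred ar} {X : Finset (Tm V)}
    (h : Fm.dquant X ψ ∈ subs φ) : ψ ∈ subs φ :=
  subs_closed h (List.mem_cons_of_mem _ (subs_self ψ))

lemma mem_subs_and_left {φ ψ χ : Fm V Pred ar} (h : Fm.and ψ χ ∈ subs φ) : ψ ∈ subs φ :=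
  subs_closed h (List.mem_cons_of_mem _ (List.mem_append.2 (Or.inl (subs_self ψ))))

lemma mem_subs_and_right {φ ψ χ : Fm V Pred ar} (h : Fm.and ψ χ ∈ subs φ) : χ ∈ subs φ :=
  subs_closed h (List.mem_cons_of_mem _ (List.mem_append.2 (Or.inr (subs_self χ))))

/-- The truth lemma. -/
lemma truth (hφ : φ.neIdx) : ∀ ψ : Fm V Pred ar, ψ ∈ subs φ → ψ.neIdx →
    ∀ (j : Fin (nn φ)) (s : M.W), Hull M s0 s → (j : ℕ) + nh ψ ≤ nh φ →
    ((KN M s0 φ).sat ψ (worldOf M φ j s) ↔ M.toGRKripke.sat ψ s) := by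
  intro ψ
  induction ψ with
  | atom P a =>
      intro hsub hne j s hs hH
      show valAtomN M s0 φ P a (worldOf M φ j s) ↔ M.valAtom P a s
      have hH' : (j : ℕ) ≤ nh φ := by
        have : (j : ℕ) + nh (Fm.atom P a) ≤ nh φ := hH
        simpa [nh] using this
      have hmD : md a ≤ Dd φ := md_le_Dd hsub
      have hb : (j : ℕ) + md a ≤ nn φ - 1 := by unfold nn; omega
      by_cases h0 : ar P = 0
      · have hmd : md a = 0 := md_eq_zero h0 a
        have hmem : (⟨P, a⟩ : (P : Pred) × (Fin (ar P) → Tm V)) ∈ RAtoms φ := by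
          have h1 := mem_RAtoms (φ := φ) hsub
          rw [hmd] at h1
          have hfa : (fun i => stripn 0 (a i)) = a := funext fun i => rfl
          rwa [hfa] at h1
        unfold valAtomN
        rw [hmd]
        show Acore M s0 φ (worldOf M φ j s) P (fun i => stripn 0 (a i)) ↔ _
        have hfa : (fun i => stripn 0 (a i)) = a := funext fun i => rfl
        rw [hfa]
        unfold Acore
        rw [if_pos h0]
        constructor
        · rintro ⟨-, hv⟩; exact (null_hull M s0 h0 a hs).mpr hv
        · intro hv; exact ⟨hmem, (null_hull M s0 h0 a hs).mp hv⟩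
      · have hmem := mem_RAtoms (φ := φ) hsub
        unfold valAtomN
        rw [gN_worldOf_iter M φ (md a) j ⟨(j : ℕ) + md a, by have := j.isLt; unfold nn at hb ⊢; omega⟩
          rfl hb s]
        rw [acore_worldOf M s0 φ _ _ h0 hmem]
        exact (C6iter M (md a) a s (fun i => md_le a i)).symm
  | neg ψ ih =>
      intro hsub hne j s hs hH
      have hψ : ψ ∈ subs φ := mem_subs_neg hsub
      have hb : (j : ℕ) + nh ψ ≤ nh φ := by
        have : (j : ℕ) + nh (Fm.neg ψ) ≤ nh φ := hH
        simpa [nh] using this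
      have h1 := ih hψ hne j s hs hb
      show ¬ (KN M s0 φ).sat ψ (worldOf M φ j s) ↔ ¬ M.toGRKripke.sat ψ s
      exact not_congr h1
  | and ψ χ ihψ ihχ =>
      intro hsub hne j s hs hH
      have hb : (j : ℕ) + max (nh ψ) (nh χ) ≤ nh φ := by
        have : (j : ℕ) + nh (Fm.and ψ χ) ≤ nh φ := hH
        simpa [nh] using this
      have h1 := ihψ (mem_subs_and_left hsub) hne.1 j s hs (by omega)
      have h2 := ihχ (mem_subs_and_right hsub) hne.2 j s hs (by omega)
      show (KN M s0 φ).sat ψ _ ∧ (KN M s0 φ).sat χ _ ↔ _ ∧ _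
      exact and_congr h1 h2
  | next ψ ih =>
      intro hsub hne j s hs hH
      have hb : (j : ℕ) + (nh ψ + 1) ≤ nh φ := by
        have : (j : ℕ) + nh (Fm.next ψ) ≤ nh φ := hH
        simpa [nh] using this
      have hj1 : (j : ℕ) + 1 < nn φ := by unfold nn; omega
      show (KN M s0 φ).sat ψ (gN φ (worldOf M φ j s)) ↔ M.toGRKripke.sat ψ (M.g s)
      rw [gN_worldOf M φ hj1 s]
      exact ih (mem_subs_next hsub) hne ⟨(j : ℕ) + 1, hj1⟩ (M.g s) (Hull.step_g hs)
        (by show (j : ℕ) + 1 + nh ψ ≤ nh φ; omega)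
  | dquant X ψ ih =>
      intro hsub hne j s hs hH
      obtain ⟨hXne, hneψ⟩ := hne
      have hψsub : ψ ∈ subs φ := mem_subs_dquant hsub
      have hb : (j : ℕ) + nh ψ ≤ nh φ := by
        have : (j : ℕ) + nh (Fm.dquant X ψ) ≤ nh φ := hH
        simpa [nh] using this
      constructor
      · intro hsat
        by_contra hM
        have hM' : ¬ ∀ t, M.eq X s t → M.toGRKripke.sat ψ t := hM
        push_neg at hM'
        obtain ⟨t, hst, hψt⟩ := hM'
        have ht : Hull M s0 t := Hull.step_eq hs hXne hst
        have he := eq_worldOf M s0 φ hφ hXne hs ht hst j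
        have hw := hsat (worldOf M φ j t) he
        exact hψt ((ih hψsub hneψ j t ht hb).mp hw)
      · intro hM w' he
        rcases he with ⟨habs, -⟩ | ⟨j₀, τ, τ', heq, heq', hhs, hca⟩
        · exact absurd habs (by unfold worldOf; simp)
        · rw [show worldOf M φ j s
              = some ⟨j, fun i : Fin (nn φ + 1 - (j : ℕ)) => Base M φ (M.g^[(i : ℕ)] s)⟩
              from rfl, Option.some.injEq] at heq
          rcases heq with ⟨⟩
          have hr := (hhs 0).mp (RealW_worldOf_iter M s0 φ j hs 0)
          rw [heq'] at hr
          obtain ⟨t, ht, hτ'⟩ := hr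
          have hτ'' : τ' = fun i : Fin (nn φ + 1 - (j : ℕ)) => Base M φ (M.g^[(i : ℕ)] t) := hτ'
          subst hτ''
          rw [heq']
          have hXi : X ∈ idxs φ := mem_idxs hsub
          have hXr : X ∈ RelSets φ := idxs_subset_RelSets hXi
          have h0k : (0 : ℕ) + (j : ℕ) ≤ nn φ - 1 := by
            have := j.isLt; unfold nn at *; omega
          have hIA := hca 0 h0k X hXr (Or.inl (fun z hz => Cl.base hz))
          have hMt : M.toGRKripke.sat (Fm.dquant X ψ) t := (hIA.1 hXi ψ hψsub).mp hM
          have hψt : M.toGRKripke.sat ψ t := hMt t ((M.C2 X hXne).refl t)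
          exact (ih hψsub hneψ j t ht hb).mpr hψt
  | datom X y =>
      intro hsub hne j s hs hH
      show valDepN φ X y (worldOf M φ j s) ↔ M.valDep X y s
      constructor
      · intro h
        refine Cl_sound M ?_ hne h
        intro k Z y' hf
        obtain ⟨hk, hZ, hy, hdata⟩ := hf
        exact ⟨RelSets_nonempty hφ hZ, hdata⟩
      · intro h
        have hk0 : (0 : ℕ) + (j : ℕ) ≤ nn φ - 1 := by
          have := j.isLt; unfold nn at *; omega
        have hf : Fw φ ⟨j, fun i : Fin (nn φ + 1 - (j : ℕ)) => Base M φ (M.g^[(i : ℕ)] s)⟩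
            0 X y :=
          ⟨hk0, rpairs_fst_mem_RelSets (mem_rpairs hsub),
            rpairs_snd_mem_RTm (mem_rpairs hsub), h⟩
        exact Cl.fact (F := FF φ (worldOf M φ j s)) hf (fun z hz => Cl.base hz)

end FMPaux

/-- **Finite model property of DFD^{≠∅}**: every `L^{≠∅}`-formula satisfiable in some general
relational model of DFD^{≠∅} is satisfiable in a finite general relational model of
DFD^{≠∅}. -/
theorem DFDNE_finite_model_property {V Pred : Type} [DecidableEq V] [Fintype V] [Inhabited V]
    {ar : Pred → ℕ} :
    ∀ φ : Fm V Pred ar, φ.neIdx →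
      (∃ (M : GRModelNE V Pred ar) (s : M.W), M.toGRKripke.sat φ s) →
      ∃ M : GRModelNE V Pred ar, Finite M.W ∧ ∃ s : M.W, M.toGRKripke.sat φ s := by
  intro φ hne hsat
  obtain ⟨M, s0, hs⟩ := hsat
  classical
  refine ⟨{ toGRKripke := FMPaux.KN M s0 φ
            C2 := fun X _ => FMPaux.C2N M s0 φ X
            C3ref := fun X x hx w => FMPaux.C3refN φ X x hx w
            C3trans := fun X Y Z w _ _ h1 h2 => FMPaux.C3transN φ X Y Z w h1 h2
            C3det := fun x w => FMPaux.C3detN φ x w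
            C4 := fun X Y w w' _ _ he hd => FMPaux.C4N M s0 φ X Y w w' he hd
            C5 := fun P a X w w' _ he hin hv => FMPaux.C5N M s0 φ P a X w w' he hin hv
            C6 := fun P a w => FMPaux.C6N M s0 φ P a w
            C7 := fun X w w' _ he => FMPaux.C7N M s0 φ X w w' he
            C8 := fun X Y w _ hd => FMPaux.C8N φ X Y w hd }, ?_, ?_⟩
  · exact FMPaux.Wld_finite φ
  · have h0 : 0 < FMPaux.nn φ := by unfold FMPaux.nn; omega
    refine ⟨FMPaux.worldOf M φ ⟨0, h0⟩ s0, ?_⟩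
    exact (FMPaux.truth M s0 φ hne φ (FMPaux.subs_self φ) hne ⟨0, h0⟩ s0
      (FMPaux.Hull.refl) (by show (0 : ℕ) + FMPaux.nh φ ≤ FMPaux.nh φ; omega)).mpr hs
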